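/- Let n ≥ 1 and let f be a probability density on ℝ with continuous cdf F, such that each integral K(f, f_(i)) = ∫ f(x)·log(f(x)/f_(i)(x)) dx exists. Then the Kullback–Leibler information between the distribution of an SRS and of a perfect RSS of size n is distribution-free and equals K(X_SRS, X_RSS) = Σ_{i=1}^n K(f, f_(i)) = n·(n-1) − Σ_{i=1}^n log(i·C(n,i)). -/

import Mathlib

open MeasureTheory Real

/-- Cumulative distribution function of a density `f`. -/
noncomputable def cdfOf (f : ℝ → ℝ) (x : ℝ) : ℝ := ∫ t in Set.Iic x, f t

section Aux
open Set Filter Topology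
open scoped ENNReal NNReal

noncomputable def muOf (f : ℝ → ℝ) : Measure ℝ :=
  volume.withDensity (fun x => ENNReal.ofReal (f x))

section Core
variable {f : ℝ → ℝ}
variable (hf_meas : Measurable f) (hf_nonneg : ∀ x, 0 ≤ f x) (hf_int : ∫ x, f x = 1)
  (hF_cont : Continuous (cdfOf f))

set_option linter.unusedSectionVars false

include hf_int in
lemma f_integrable : Integrable f := by
  by_contra h
  rw [integral_undef h] at hf_int
  norm_num at hf_int

include hf_nonneg hf_int in
lemma muOf_prob : IsProbabilityMeasure (muOf f) := by
  constructor
  rw [muOf, withDensity_apply _ MeasurableSet.univ, Measure.restrict_univ,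
    ← ofReal_integral_eq_lintegral_ofReal (f_integrable hf_int) (ae_of_all _ hf_nonneg),
    hf_int, ENNReal.ofReal_one]

include hf_nonneg hf_int in
lemma cdfOf_eq_toReal (x : ℝ) : cdfOf f x = ((muOf f) (Set.Iic x)).toReal := by
  rw [muOf, withDensity_apply _ measurableSet_Iic,
    ← ofReal_integral_eq_lintegral_ofReal ((f_integrable hf_int).integrableOn)
      (ae_of_all _ fun x => hf_nonneg x),
    ENNReal.toReal_ofReal (integral_nonneg fun t => hf_nonneg t), cdfOf]

include hf_nonneg in
lemma cdfOf_nonneg (x : ℝ) : 0 ≤ cdfOf f x := integral_nonneg fun t => hf_nonneg t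

include hf_nonneg hf_int in
lemma cdfOf_le_one (x : ℝ) : cdfOf f x ≤ 1 := by
  have := muOf_prob hf_nonneg hf_int
  rw [cdfOf_eq_toReal hf_nonneg hf_int]
  have h1 : (muOf f) (Set.Iic x) ≤ 1 := prob_le_one
  calc ((muOf f) (Set.Iic x)).toReal ≤ (1 : ℝ≥0∞).toReal :=
        ENNReal.toReal_mono (by norm_num) h1
    _ = 1 := by simp

include hf_nonneg hf_int in
lemma cdfOf_mono : Monotone (cdfOf f) := by
  have := muOf_prob hf_nonneg hf_int
  intro x y hxy
  rw [cdfOf_eq_toReal hf_nonneg hf_int, cdfOf_eq_toReal hf_nonneg hf_int]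
  exact ENNReal.toReal_mono (measure_ne_top _ _) (measure_mono (Set.Iic_subset_Iic.mpr hxy))

include hf_nonneg hf_int in
lemma cdfOf_tendsto_atTop : Tendsto (cdfOf f) atTop (𝓝 1) := by
  have := muOf_prob hf_nonneg hf_int
  have h := tendsto_measure_Iic_atTop (muOf f)
  rw [measure_univ] at h
  have h2 : Tendsto (fun x => ((muOf f) (Set.Iic x)).toReal) atTop (𝓝 (1:ℝ≥0∞).toReal) :=
    (ENNReal.tendsto_toReal (by norm_num)).comp h
  simp only [ENNReal.toReal_one] at h2
  convert h2 using 1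
  ext x
  exact cdfOf_eq_toReal hf_nonneg hf_int x

include hf_nonneg hf_int in
lemma cdfOf_tendsto_atBot : Tendsto (cdfOf f) atBot (𝓝 0) := by
  have := muOf_prob hf_nonneg hf_int
  have h : Tendsto (fun x => (muOf f) (Set.Iic x)) atBot (𝓝 ((muOf f) (⋂ x : ℝ, Set.Iic x))) := by
    exact tendsto_measure_iInter_atBot (fun x => measurableSet_Iic.nullMeasurableSet)
      monotone_Iic ⟨0, measure_ne_top _ _⟩
  have hempty : (⋂ x : ℝ, Set.Iic x) = ∅ := by
    ext y
    simp only [Set.mem_iInter, Set.mem_Iic, Set.mem_empty_iff_false, iff_false, not_forall]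
    exact ⟨y - 1, by push_neg; linarith⟩
  rw [hempty, measure_empty] at h
  have h2 : Tendsto (fun x => ((muOf f) (Set.Iic x)).toReal) atBot (𝓝 (0:ℝ≥0∞).toReal) :=
    (ENNReal.tendsto_toReal (by norm_num)).comp h
  simp only [ENNReal.toReal_zero] at h2
  convert h2 using 1
  ext x
  exact cdfOf_eq_toReal hf_nonneg hf_int x

include hf_meas hf_nonneg hf_int hF_cont in
lemma map_cdfOf : Measure.map (cdfOf f) (muOf f) = volume.restrict (Set.Ioc 0 1) := by
  have hprob := muOf_prob hf_nonneg hf_int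
  have hmeasF : Measurable (cdfOf f) := hF_cont.measurable
  have : IsProbabilityMeasure (Measure.map (cdfOf f) (muOf f)) :=
    Measure.isProbabilityMeasure_map hmeasF.aemeasurable
  refine MeasureTheory.Measure.ext_of_Iic _ _ (fun t => ?_)
  rw [Measure.map_apply hmeasF measurableSet_Iic, Measure.restrict_apply measurableSet_Iic]
  rcases lt_or_ge t 0 with ht | ht
  · have h1 : cdfOf f ⁻¹' Set.Iic t = ∅ := by
      ext x
      simp only [Set.mem_preimage, Set.mem_Iic, Set.mem_empty_iff_false, iff_false, not_le]
      exact lt_of_lt_of_le ht (cdfOf_nonneg hf_nonneg x)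
    have h2 : Set.Iic t ∩ Set.Ioc 0 1 = ∅ := by
      ext x
      simp only [Set.mem_inter_iff, Set.mem_Iic, Set.mem_Ioc, Set.mem_empty_iff_false, iff_false]
      rintro ⟨hx1, hx2, _⟩
      linarith
    rw [h1, h2]
    simp
  rcases le_or_gt 1 t with ht1 | ht1
  · have h1 : cdfOf f ⁻¹' Set.Iic t = Set.univ := by
      ext x
      simp only [Set.mem_preimage, Set.mem_Iic, Set.mem_univ, iff_true]
      exact le_trans (cdfOf_le_one hf_nonneg hf_int x) ht1
    have h2 : Set.Iic t ∩ Set.Ioc 0 1 = Set.Ioc 0 1 := by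
      apply Set.inter_eq_self_of_subset_right
      intro x hx
      exact le_trans hx.2 ht1
    rw [h1, h2, measure_univ, Real.volume_Ioc]
    norm_num
  · -- 0 ≤ t < 1
    have h2 : Set.Iic t ∩ Set.Ioc 0 1 = Set.Ioc 0 t := by
      ext x
      simp only [Set.mem_inter_iff, Set.mem_Iic, Set.mem_Ioc]
      constructor
      · rintro ⟨hx1, hx2, _⟩; exact ⟨hx2, hx1⟩
      · rintro ⟨hx1, hx2⟩; exact ⟨hx2, hx1, le_trans hx2 ht1.le⟩
    rw [h2, Real.volume_Ioc, sub_zero]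
    set S := cdfOf f ⁻¹' Set.Iic t with hS
    rcases Set.eq_empty_or_nonempty S with hSe | hSne
    · -- S empty forces t = 0
      have ht0 : t = 0 := by
        by_contra h0
        have htpos : 0 < t := lt_of_le_of_ne ht (Ne.symm h0)
        have : ∀ᶠ x in atBot, cdfOf f x < t :=
          (cdfOf_tendsto_atBot hf_nonneg hf_int).eventually (eventually_lt_nhds htpos)
        obtain ⟨x, hx⟩ := this.exists
        exact absurd (Set.eq_empty_iff_forall_notMem.mp hSe x) (by simp [hS, hx.le])
      rw [hSe, ht0, measure_empty, ENNReal.ofReal_zero]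
    · have hScl : IsClosed S := IsClosed.preimage hF_cont isClosed_Iic
      have hSdown : ∀ x y, x ≤ y → y ∈ S → x ∈ S := by
        intro x y hxy hy
        simp only [hS, Set.mem_preimage, Set.mem_Iic] at hy ⊢
        exact le_trans (cdfOf_mono hf_nonneg hf_int hxy) hy
      have hbdd : BddAbove S := by
        by_contra hb
        have : ∀ᶠ x in atTop, t < cdfOf f x :=
          (cdfOf_tendsto_atTop hf_nonneg hf_int).eventually (eventually_gt_nhds ht1)
        obtain ⟨x₀, hx₀⟩ := this.exists
        obtain ⟨s, hs, hlt⟩ := not_bddAbove_iff.mp hb x₀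
        have : cdfOf f x₀ ≤ t :=
          le_trans (cdfOf_mono hf_nonneg hf_int hlt.le) hs
        linarith
      set a := sSup S with ha
      have haS : a ∈ S := hScl.csSup_mem hSne hbdd
      have hFa_le : cdfOf f a ≤ t := haS
      have hFa_ge : t ≤ cdfOf f a := by
        by_contra h
        push_neg at h
        have hU : cdfOf f ⁻¹' Set.Iio t ∈ 𝓝 a :=
          (isOpen_Iio.preimage hF_cont).mem_nhds h
        obtain ⟨ε, hε, hball⟩ := Metric.mem_nhds_iff.mp hU
        have hb : a + ε / 2 ∈ S := by
          have : a + ε / 2 ∈ Metric.ball a ε := by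
            simp only [Metric.mem_ball, Real.dist_eq, add_sub_cancel_left,
              abs_of_pos (by linarith : (0:ℝ) < ε / 2)]
            linarith
          have := hball this
          simp only [Set.mem_preimage, Set.mem_Iio] at this
          simp only [hS, Set.mem_preimage, Set.mem_Iic]
          exact this.le
        have : a + ε / 2 ≤ a := le_csSup hbdd hb
        linarith
      have hFa : cdfOf f a = t := le_antisymm hFa_le hFa_ge
      have hSIic : S = Set.Iic a := by
        ext x
        constructor
        · intro hx; exact le_csSup hbdd hx
        · intro hx; exact hSdown x a hx haS
      rw [hSIic, ← hFa, cdfOf_eq_toReal hf_nonneg hf_int,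
        ENNReal.ofReal_toReal (measure_ne_top _ _)]

end Core

lemma int_exp_mul : ∫ x in Set.Ioi (0:ℝ), Real.exp (-x) * x = 1 := by
  have h := Real.Gamma_eq_integral (by norm_num : (0:ℝ) < 2)
  have h2 : Real.Gamma 2 = 1 := by
    have := Real.Gamma_nat_eq_factorial 1
    norm_num at this
    convert this using 2
    norm_num
  rw [h2] at h
  rw [h]
  refine setIntegral_congr_fun measurableSet_Ioi (fun x hx => ?_)
  rw [show (2:ℝ) - 1 = 1 by norm_num, Real.rpow_one]

lemma int_log_Ioo : ∫ x in Set.Ioo (0:ℝ) 1, Real.log x = -1 := by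
  have himg : (fun u => Real.exp (-u)) '' (Set.Ioi (0:ℝ)) = Set.Ioo 0 1 := by
    ext y
    constructor
    · rintro ⟨u, hu, rfl⟩
      exact ⟨Real.exp_pos _, Real.exp_lt_one_iff.mpr (by simpa using hu)⟩
    · rintro ⟨h0, h1⟩
      refine ⟨-Real.log y, by simpa using Real.log_neg h0 h1, ?_⟩
      show Real.exp (-(-Real.log y)) = y
      rw [neg_neg, Real.exp_log h0]
  have hderiv : ∀ u ∈ Set.Ioi (0:ℝ), HasDerivWithinAt (fun u => Real.exp (-u))
      (-Real.exp (-u)) (Set.Ioi 0) u := by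
    intro u _
    have : HasDerivAt (fun u => Real.exp (-u)) (Real.exp (-u) * (-1)) u :=
      (Real.hasDerivAt_exp (-u)).comp u ((hasDerivAt_id u).neg)
    simpa [mul_comm] using this.hasDerivWithinAt
  have hinj : Set.InjOn (fun u => Real.exp (-u)) (Set.Ioi (0:ℝ)) := by
    intro a _ b _ h
    have := Real.exp_injective h
    linarith [neg_injective this]
  have := MeasureTheory.integral_image_eq_integral_abs_deriv_smul measurableSet_Ioi
    hderiv hinj Real.log
  rw [himg] at this
  rw [this]
  have : ∀ u ∈ Set.Ioi (0:ℝ), |(-Real.exp (-u))| • Real.log (Real.exp (-u))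
      = -(Real.exp (-u) * u) := by
    intro u _
    rw [abs_neg, abs_of_pos (Real.exp_pos _), Real.log_exp, smul_eq_mul]
    ring
  rw [setIntegral_congr_fun measurableSet_Ioi this, integral_neg, int_exp_mul]

lemma int_log1m_Ioo : ∫ x in Set.Ioo (0:ℝ) 1, Real.log (1 - x) = -1 := by
  have himg : (fun u => 1 - Real.exp (-u)) '' (Set.Ioi (0:ℝ)) = Set.Ioo 0 1 := by
    ext y
    constructor
    · rintro ⟨u, hu, rfl⟩
      constructor
      · simp only [sub_pos]
        exact Real.exp_lt_one_iff.mpr (by simpa using hu)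
      · have := Real.exp_pos (-u)
        show 1 - Real.exp (-u) < 1
        linarith
    · rintro ⟨h0, h1⟩
      refine ⟨-Real.log (1 - y), by simpa using Real.log_neg (by linarith) (by linarith), ?_⟩
      show 1 - Real.exp (-(-Real.log (1 - y))) = y
      rw [neg_neg, Real.exp_log (by linarith)]; ring
  have hderiv : ∀ u ∈ Set.Ioi (0:ℝ), HasDerivWithinAt (fun u => 1 - Real.exp (-u))
      (Real.exp (-u)) (Set.Ioi 0) u := by
    intro u _
    have h1 : HasDerivAt (fun u => Real.exp (-u)) (Real.exp (-u) * (-1)) u :=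
      (Real.hasDerivAt_exp (-u)).comp u ((hasDerivAt_id u).neg)
    have := (hasDerivAt_const u (1:ℝ)).sub h1
    simpa using (h1.const_sub (1:ℝ)).hasDerivWithinAt
  have hinj : Set.InjOn (fun u => 1 - Real.exp (-u)) (Set.Ioi (0:ℝ)) := by
    intro a _ b _ h
    simp only [sub_right_inj] at h
    have := Real.exp_injective h
    linarith [neg_injective this]
  have hkey := MeasureTheory.integral_image_eq_integral_abs_deriv_smul measurableSet_Ioi
    hderiv hinj (fun x => Real.log (1 - x))
  rw [himg] at hkey
  rw [hkey]
  have : ∀ u ∈ Set.Ioi (0:ℝ), |Real.exp (-u)| • Real.log (1 - (1 - Real.exp (-u)))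
      = -(Real.exp (-u) * u) := by
    intro u _
    rw [abs_of_pos (Real.exp_pos _), show 1 - (1 - Real.exp (-u)) = Real.exp (-u) by ring,
      Real.log_exp, smul_eq_mul]
    ring
  rw [setIntegral_congr_fun measurableSet_Ioi this, integral_neg, int_exp_mul]


section Core2
variable {f : ℝ → ℝ}
variable (hf_meas : Measurable f) (hf_nonneg : ∀ x, 0 ≤ f x) (hf_int : ∫ x, f x = 1)
  (hF_cont : Continuous (cdfOf f))

set_option linter.unusedSectionVars false

include hf_meas hf_nonneg hf_int hF_cont in
lemma integral_comp_cdfOf {g : ℝ → ℝ} (hg : Measurable g) :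
    ∫ x, f x * g (cdfOf f x) = ∫ u in Set.Ioc (0:ℝ) 1, g u := by
  have hprob := muOf_prob hf_nonneg hf_int
  have h1 : ∫ x, f x * g (cdfOf f x) = ∫ x, g (cdfOf f x) ∂(muOf f) := by
    rw [muOf]
    have : (fun x => ENNReal.ofReal (f x)) = (fun x => ((Real.toNNReal (f x) : ℝ≥0) : ℝ≥0∞)) :=
      rfl
    rw [this, integral_withDensity_eq_integral_smul (hf_meas.real_toNNReal)]
    refine integral_congr_ae (ae_of_all _ fun x => ?_)
    simp [NNReal.smul_def, Real.coe_toNNReal _ (hf_nonneg x)]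
  have h2 : ∫ x, g (cdfOf f x) ∂(muOf f) = ∫ u, g u ∂(Measure.map (cdfOf f) (muOf f)) := by
    rw [integral_map hF_cont.measurable.aemeasurable hg.aestronglyMeasurable]
  rw [h1, h2, map_cdfOf hf_meas hf_nonneg hf_int hF_cont]

include hf_meas hf_nonneg hf_int hF_cont in
lemma integral_f_logF : ∫ x, f x * Real.log (cdfOf f x) = -1 := by
  rw [integral_comp_cdfOf hf_meas hf_nonneg hf_int hF_cont Real.measurable_log,
    integral_Ioc_eq_integral_Ioo, int_log_Ioo]

include hf_meas hf_nonneg hf_int hF_cont in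
lemma integral_f_log1F : ∫ x, f x * Real.log (1 - cdfOf f x) = -1 := by
  rw [integral_comp_cdfOf hf_meas hf_nonneg hf_int hF_cont
    (g := fun u => Real.log (1 - u))
    (Real.measurable_log.comp (measurable_const.sub measurable_id)),
    integral_Ioc_eq_integral_Ioo, int_log1m_Ioo]

include hf_meas hf_nonneg hf_int hF_cont in
lemma null_boundary :
    volume {x | 0 < f x ∧ (cdfOf f x = 0 ∨ cdfOf f x = 1)} = 0 := by
  have hprob := muOf_prob hf_nonneg hf_int
  have hmeasF : Measurable (cdfOf f) := hF_cont.measurable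
  set N := {x | 0 < f x ∧ (cdfOf f x = 0 ∨ cdfOf f x = 1)} with hN
  have hNmeas : MeasurableSet N := by
    apply MeasurableSet.inter (measurableSet_lt measurable_const hf_meas)
    exact (hmeasF (measurableSet_singleton 0)).union (hmeasF (measurableSet_singleton 1))
  have hmuN : (muOf f) N = 0 := by
    have hsub : N ⊆ (cdfOf f ⁻¹' Set.Iic 0) ∪ (cdfOf f ⁻¹' Set.Ici 1) := by
      rintro x ⟨-, h | h⟩
      · exact Or.inl (by simp [h])
      · exact Or.inr (by simp [h])
    refine measure_mono_null hsub ?_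
    have hmap := map_cdfOf hf_meas hf_nonneg hf_int hF_cont
    have h0 : (muOf f) (cdfOf f ⁻¹' Set.Iic 0) = 0 := by
      have := Measure.map_apply hmeasF (measurableSet_Iic (a := (0:ℝ)))
        (μ := muOf f)
      rw [hmap] at this
      rw [← this, Measure.restrict_apply measurableSet_Iic]
      have : Set.Iic (0:ℝ) ∩ Set.Ioc 0 1 = ∅ := by
        ext x
        simp only [Set.mem_inter_iff, Set.mem_Iic, Set.mem_Ioc, Set.mem_empty_iff_false,
          iff_false]
        rintro ⟨h1, h2, -⟩; linarith
      rw [this, measure_empty]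
    have h1 : (muOf f) (cdfOf f ⁻¹' Set.Ici 1) = 0 := by
      have := Measure.map_apply hmeasF (measurableSet_Ici (a := (1:ℝ)))
        (μ := muOf f)
      rw [hmap] at this
      rw [← this, Measure.restrict_apply measurableSet_Ici]
      have : Set.Ici (1:ℝ) ∩ Set.Ioc 0 1 = {1} := by
        ext x
        simp only [Set.mem_inter_iff, Set.mem_Ici, Set.mem_Ioc, Set.mem_singleton_iff]
        constructor
        · rintro ⟨h1, -, h3⟩; linarith
        · rintro rfl; norm_num
      rw [this, Real.volume_singleton]
    exact measure_union_null h0 h1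
  -- now lift to volume
  rw [muOf, withDensity_apply _ hNmeas] at hmuN
  have hae : (fun x => ENNReal.ofReal (f x)) =ᵐ[volume.restrict N] 0 :=
    (lintegral_eq_zero_iff (hf_meas.ennreal_ofReal)).mp hmuN
  have hsub : N ⊆ {x | ENNReal.ofReal (f x) ≠ 0} := by
    rintro x ⟨hx, -⟩
    simp only [Set.mem_setOf_eq, ne_eq, ENNReal.ofReal_eq_zero, not_le]
    exact hx
  have := ae_iff.mp hae
  refine le_antisymm ?_ zero_le
  calc volume N = (volume.restrict N) N := (Measure.restrict_apply_self _ _).symm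
    _ ≤ (volume.restrict N) {x | ENNReal.ofReal (f x) ≠ 0} := measure_mono hsub
    _ = 0 := by simpa using this

end Core2

end Aux

/-- Density of the `i`-th order statistic from a sample of size `n` with parent density `f`. -/
noncomputable def osDen (f : ℝ → ℝ) (n i : ℕ) (x : ℝ) : ℝ :=
  (i : ℝ) * (n.choose i : ℝ) * (cdfOf f x) ^ (i - 1) * (1 - cdfOf f x) ^ (n - i) * f x

/-- Kullback–Leibler divergence between densities `g` and `h`. -/
noncomputable def KL (g h : ℝ → ℝ) : ℝ := ∫ x, g x * Real.log (g x / h x)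

/-- The Kullback–Leibler information between the distribution of an SRS and of a perfect RSS
of size `n` is distribution-free:
`Σ_{i=1}^n K(f, f_(i)) = n·(n-1) − Σ_{i=1}^n log(i·C(n,i))`. -/
theorem KL_SRS_RSS_distribution_free (n : ℕ) (hn : 1 ≤ n) (f : ℝ → ℝ)
    (hf_meas : Measurable f) (hf_nonneg : ∀ x, 0 ≤ f x)
    (hf_int : ∫ x, f x = 1)
    (hF_cont : Continuous (cdfOf f))
    (hint : ∀ i ∈ Finset.Icc 1 n,
      Integrable (fun x => f x * Real.log (f x / osDen f n i x))) :
    (∑ i ∈ Finset.Icc 1 n, KL f (osDen f n i))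
      = (n : ℝ) * ((n : ℝ) - 1)
        - ∑ i ∈ Finset.Icc 1 n, Real.log ((i : ℝ) * (n.choose i : ℝ)) := by
  have hfi : Integrable f := f_integrable hf_int
  have hlogF := integral_f_logF hf_meas hf_nonneg hf_int hF_cont
  have hlog1F := integral_f_log1F hf_meas hf_nonneg hf_int hF_cont
  have hIlogF : Integrable (fun x => f x * Real.log (cdfOf f x)) := by
    by_contra h
    rw [integral_undef h] at hlogF
    norm_num at hlogF
  have hIlog1F : Integrable (fun x => f x * Real.log (1 - cdfOf f x)) := by
    by_contra h
    rw [integral_undef h] at hlog1F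
    norm_num at hlog1F
  have hnull := null_boundary hf_meas hf_nonneg hf_int hF_cont
  have key : ∀ i ∈ Finset.Icc 1 n,
      KL f (osDen f n i) = -Real.log ((i : ℝ) * (n.choose i : ℝ)) + ((n : ℝ) - 1) := by
    intro i hi
    rw [Finset.mem_Icc] at hi
    obtain ⟨hi1, hin⟩ := hi
    have hchoose : 0 < (n.choose i : ℝ) := by
      exact_mod_cast Nat.choose_pos hin
    have hipos : 0 < (i : ℝ) := by exact_mod_cast hi1
    set c : ℝ := (i : ℝ) * (n.choose i : ℝ) with hc
    have hcpos : 0 < c := mul_pos hipos hchoose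
    have hae : (fun x => f x * Real.log (f x / osDen f n i x)) =ᵐ[volume]
        (fun x => (-Real.log c) * f x
          - ((i : ℝ) - 1) * (f x * Real.log (cdfOf f x))
          - ((n : ℝ) - (i : ℝ)) * (f x * Real.log (1 - cdfOf f x))) := by
      have hae0 : ∀ᵐ x ∂volume, x ∉ {x | 0 < f x ∧ (cdfOf f x = 0 ∨ cdfOf f x = 1)} :=
        measure_eq_zero_iff_ae_notMem.mp hnull
      filter_upwards [hae0] with x hx
      rcases eq_or_lt_of_le (hf_nonneg x) with hf0 | hfpos
      · rw [← hf0]; ring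
      · have hx' : cdfOf f x ≠ 0 ∧ cdfOf f x ≠ 1 := by
          by_contra h
          push_neg at h
          rcases eq_or_ne (cdfOf f x) 0 with h0 | h0
          · exact hx ⟨hfpos, Or.inl h0⟩
          · exact hx ⟨hfpos, Or.inr (h h0)⟩
        have hF0 : 0 < cdfOf f x := lt_of_le_of_ne (cdfOf_nonneg hf_nonneg x) (Ne.symm hx'.1)
        have hF1 : cdfOf f x < 1 :=
          lt_of_le_of_ne (cdfOf_le_one hf_nonneg hf_int x) hx'.2
        have hfne : f x ≠ 0 := ne_of_gt hfpos
        have h1ne : (1 : ℝ) - cdfOf f x ≠ 0 := by linarith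
        have hosDen : osDen f n i x
            = c * (cdfOf f x) ^ (i - 1) * (1 - cdfOf f x) ^ (n - i) * f x := rfl
        rw [hosDen, Real.log_div hfne (by positivity),
          Real.log_mul (by positivity) hfne,
          Real.log_mul (by positivity) (pow_ne_zero _ h1ne),
          Real.log_mul (ne_of_gt hcpos) (pow_ne_zero _ (ne_of_gt hF0)),
          Real.log_pow, Real.log_pow]
        have hci : ((i - 1 : ℕ) : ℝ) = (i : ℝ) - 1 := by
          push_cast [Nat.cast_sub hi1]; ring
        have hcn : ((n - i : ℕ) : ℝ) = (n : ℝ) - (i : ℝ) := by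
          push_cast [Nat.cast_sub hin]; ring
        rw [hci, hcn]
        ring
    rw [KL, integral_congr_ae hae]
    have hInt1 : Integrable (fun x => -Real.log c * f x
        - ((i : ℝ) - 1) * (f x * Real.log (cdfOf f x))) :=
      (hfi.const_mul _).sub (hIlogF.const_mul _)
    rw [integral_sub hInt1 (hIlog1F.const_mul _),
      integral_sub (hfi.const_mul _) (hIlogF.const_mul _),
      MeasureTheory.integral_const_mul, MeasureTheory.integral_const_mul,
      MeasureTheory.integral_const_mul, hf_int, hlogF, hlog1F]
    ring
  rw [Finset.sum_congr rfl key, Finset.sum_add_distrib, Finset.sum_const,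
    Nat.card_Icc, Finset.sum_neg_distrib]
  simp only [Nat.add_sub_cancel, nsmul_eq_mul]
  ring
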